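/- For every binary sequence s ∈ S and every real number r with 0 ≤ r < 1/10, the family n ↦ |a_n^s|·r^{2+4n} is summable; consequently the power series φ_s(x,y) = x + Σ_{n≥0} a_n^s y^{2+4n} converges (defines a holomorphic function) on the set {(x,y) ∈ ℂ² : |y| < 1/10}. -/

import Mathlib

noncomputable section

/-- The space of binary sequences `{0,1}^ℕ`. -/
abbrev BinSeq := ℕ → Fin 2

/-- The left-shift map `σ`. -/
def shift (s : BinSeq) : BinSeq := fun n => s (n + 1)

/-- `a : S → ℕ → ℂ` satisfies the recursion defining the coefficients `aₙˢ`: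
`a₀ˢ = (−1)^{s₀}` and `a_{n+1}ˢ = −(1/(2a₀ˢ)) Σ_{i+j=n+1, i,j≥1} aᵢˢ aⱼˢ` if `4 ∤ n`,
with the extra term `−a_{n/4}^{σ(s)}/(2a₀ˢ)` if `4 ∣ n`. -/
def IsCoeffFamily (a : BinSeq → ℕ → ℂ) : Prop :=
  (∀ s : BinSeq, a s 0 = (-1 : ℂ) ^ (s 0 : ℕ)) ∧
  (∀ (s : BinSeq) (n : ℕ), a s (n + 1) =
    if 4 ∣ n then
      -(a (shift s) (n / 4)) / (2 * a s 0)
        - (∑ i ∈ Finset.Ico 1 (n + 1), a s i * a s (n + 1 - i)) / (2 * a s 0)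
    else
      -(∑ i ∈ Finset.Ico 1 (n + 1), a s i * a s (n + 1 - i)) / (2 * a s 0))

lemma aux_sum_inv_sq (N : ℕ) : ∑ j ∈ Finset.range N, (1:ℝ) / ((j:ℝ) + 2)^2 ≤ 1 := by
  have key : ∀ j : ℕ, (1:ℝ) / ((j:ℝ) + 2)^2 ≤ 1/((j:ℝ)+1) - 1/((j:ℝ)+2) := by
    intro j
    have h1 : (0:ℝ) < (j:ℝ)+1 := by positivity
    have h2 : (0:ℝ) < (j:ℝ)+2 := by positivity
    rw [div_sub_div _ _ (ne_of_gt h1) (ne_of_gt h2), div_le_div_iff₀ (by positivity) (by positivity)]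
    nlinarith
  calc ∑ j ∈ Finset.range N, (1:ℝ) / ((j:ℝ) + 2)^2
      ≤ ∑ j ∈ Finset.range N, ((1:ℝ)/((j:ℝ)+1) - 1/((j:ℝ)+2)) := Finset.sum_le_sum fun j _ => key j
    _ = (fun j : ℕ => (1:ℝ)/((j:ℝ)+1)) 0 - (fun j : ℕ => (1:ℝ)/((j:ℝ)+1)) N := by
        rw [← Finset.sum_range_sub' (fun j : ℕ => (1:ℝ)/((j:ℝ)+1)) N]
        refine Finset.sum_congr rfl fun j _ => ?_
        push_cast; ring
    _ ≤ 1 := by simp; positivity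

lemma aux_sumf (n : ℕ) : ∑ i ∈ Finset.Ico 1 (n+1), (1:ℝ)/((i:ℝ)+1)^2 ≤ 1 := by
  rw [Finset.sum_Ico_eq_sum_range]
  have e : ∀ j ∈ Finset.range (n+1-1), (1:ℝ)/(((1+j : ℕ):ℝ)+1)^2 = 1/((j:ℝ)+2)^2 := by
    intro j _; push_cast; ring_nf
  rw [Finset.sum_congr (by norm_num) e]
  exact aux_sum_inv_sq n

lemma aux_reflect (n : ℕ) :
    ∑ i ∈ Finset.Ico 1 (n+1), (1:ℝ)/(((n+1-i : ℕ):ℝ)+1)^2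
      = ∑ i ∈ Finset.Ico 1 (n+1), (1:ℝ)/((i:ℝ)+1)^2 := by
  refine Finset.sum_bij' (fun i _ => n+1-i) (fun i _ => n+1-i) ?_ ?_ ?_ ?_ ?_
  · intro a ha; simp only [Finset.mem_Ico] at ha ⊢; omega
  · intro a ha; simp only [Finset.mem_Ico] at ha ⊢; omega
  · intro a ha; simp only [Finset.mem_Ico] at ha ⊢; omega
  · intro a ha; simp only [Finset.mem_Ico] at ha ⊢; omega
  · intro a ha; rfl

lemma aux_key_ineq (x y : ℝ) (hx : 1 ≤ x) (hy : 1 ≤ y) :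
    1/(x^2*y^2) ≤ 2/(x+y)^2 * (1/x^2 + 1/y^2) := by
  have hx0 : (0:ℝ) < x := by linarith
  have hy0 : (0:ℝ) < y := by linarith
  have e : 2/(x+y)^2 * (1/x^2 + 1/y^2) = (2*(x^2+y^2)) / ((x+y)^2*(x^2*y^2)) := by
    field_simp; ring
  rw [e, div_le_div_iff₀ (by positivity) (by positivity)]
  nlinarith [sq_nonneg (x-y), sq_nonneg (x*y), mul_pos hx0 hy0]

lemma aux_abs_a0 (a : BinSeq → ℕ → ℂ) (ha : IsCoeffFamily a) (s : BinSeq) :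
    ‖a s 0‖ = 1 := by
  rw [ha.1 s, norm_pow]
  simp

lemma aux_bound (a : BinSeq → ℕ → ℂ) (ha : IsCoeffFamily a) :
    ∀ n : ℕ, 1 ≤ n → ∀ s : BinSeq,
      ‖a s n‖ ≤ 64^n / (7*((n:ℝ)+1)^2) := by
  intro n
  induction n using Nat.strong_induction_on with
  | _ n ih =>
  intro hn s
  obtain ⟨m, rfl⟩ : ∃ m, n = m + 1 := ⟨n-1, by omega⟩
  have habs0 : ‖a s 0‖ = 1 := aux_abs_a0 a ha s
  have hD : ‖2 * a s 0‖ = 2 := by rw [norm_mul, habs0]; simp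
  set X : ℝ := 64^(m+1) / (((m:ℝ)+2)^2) with hXdef
  have hX : 0 < X := by positivity
  -- the convolution bound
  have hterm : ∀ i ∈ Finset.Ico 1 (m+1), ‖a s i * a s (m+1-i)‖
      ≤ (64^(m+1)/49) * (2/((m:ℝ)+3)^2 * (1/((i:ℝ)+1)^2 + 1/(((m+1-i:ℕ):ℝ)+1)^2)) := by
    intro i hi
    rw [Finset.mem_Ico] at hi
    obtain ⟨hi1, hi2⟩ := hi
    have hj1 : 1 ≤ m+1-i := by omega
    have b1 := ih i (by omega) hi1 s
    have b2 := ih (m+1-i) (by omega) hj1 s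
    have hx : (1:ℝ) ≤ (i:ℝ)+1 := by
      have : (0:ℝ) ≤ (i:ℝ) := Nat.cast_nonneg i
      linarith
    have hy : (1:ℝ) ≤ ((m+1-i:ℕ):ℝ)+1 := by
      have : (0:ℝ) ≤ ((m+1-i:ℕ):ℝ) := Nat.cast_nonneg _
      linarith
    have hxy : ((i:ℝ)+1) + (((m+1-i:ℕ):ℝ)+1) = (m:ℝ)+3 := by
      have hc : ((m+1-i:ℕ):ℝ) = (m:ℝ)+1-(i:ℝ) := by
        push_cast [Nat.cast_sub (show i ≤ m+1 by omega)]; ring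
      rw [hc]; ring
    have hp : (64:ℝ)^i * (64:ℝ)^(m+1-i) = 64^(m+1) := by
      rw [← pow_add]; congr 1; omega
    rw [norm_mul]
    calc ‖a s i‖ * ‖a s (m+1-i)‖
        ≤ (64^i/(7*((i:ℝ)+1)^2)) * (64^(m+1-i)/(7*(((m+1-i:ℕ):ℝ)+1)^2)) := by
          apply mul_le_mul b1 b2 (norm_nonneg _) (by positivity)
      _ = (64^(m+1)/49) * (1/(((i:ℝ)+1)^2 * ((((m+1-i:ℕ):ℝ)+1)^2))) := by
          rw [div_mul_div_comm, hp]
          have h1 : ((i:ℝ)+1)^2 ≠ 0 := by positivity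
          have h2 : (((m+1-i:ℕ):ℝ)+1)^2 ≠ 0 := by positivity
          field_simp
          ring
      _ ≤ (64^(m+1)/49) * (2/(((i:ℝ)+1) + (((m+1-i:ℕ):ℝ)+1))^2
            * (1/((i:ℝ)+1)^2 + 1/(((m+1-i:ℕ):ℝ)+1)^2)) := by
          apply mul_le_mul_of_nonneg_left (aux_key_ineq _ _ hx hy) (by positivity)
      _ = (64^(m+1)/49) * (2/((m:ℝ)+3)^2 * (1/((i:ℝ)+1)^2 + 1/(((m+1-i:ℕ):ℝ)+1)^2)) := by
          rw [hxy]
  have hconv : ‖∑ i ∈ Finset.Ico 1 (m+1), a s i * a s (m+1-i)‖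
      ≤ (4/49) * X := by
    calc ‖∑ i ∈ Finset.Ico 1 (m+1), a s i * a s (m+1-i)‖
        ≤ ∑ i ∈ Finset.Ico 1 (m+1), ‖a s i * a s (m+1-i)‖ :=
          norm_sum_le _ _
      _ ≤ ∑ i ∈ Finset.Ico 1 (m+1), (64^(m+1)/49) * (2/((m:ℝ)+3)^2
            * (1/((i:ℝ)+1)^2 + 1/(((m+1-i:ℕ):ℝ)+1)^2)) := Finset.sum_le_sum hterm
      _ = (64^(m+1)/49) * (2/((m:ℝ)+3)^2)
            * ((∑ i ∈ Finset.Ico 1 (m+1), (1:ℝ)/((i:ℝ)+1)^2)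
              + ∑ i ∈ Finset.Ico 1 (m+1), (1:ℝ)/(((m+1-i:ℕ):ℝ)+1)^2) := by
          rw [← Finset.sum_add_distrib, ← Finset.mul_sum, ← Finset.mul_sum, mul_assoc]
      _ ≤ (64^(m+1)/49) * (2/((m:ℝ)+3)^2) * (1 + 1) := by
          apply mul_le_mul_of_nonneg_left _ (by positivity)
          have h1 := aux_sumf m
          have h2 : ∑ i ∈ Finset.Ico 1 (m+1), (1:ℝ)/(((m+1-i:ℕ):ℝ)+1)^2 ≤ 1 := by
            rw [aux_reflect m]; exact aux_sumf m
          linarith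
      _ ≤ (4/49) * X := by
          have hm0 : (0:ℝ) ≤ (m:ℝ) := Nat.cast_nonneg m
          have e1 : (64:ℝ)^(m+1)/49 * (2/((m:ℝ)+3)^2) * (1+1)
              = 4*64^(m+1) / (49*((m:ℝ)+3)^2) := by
            field_simp <;> ring
          have e2 : (4:ℝ)/49 * (64^(m+1) / (((m:ℝ)+2)^2))
              = 4*64^(m+1) / (49*((m:ℝ)+2)^2) := by
            field_simp <;> ring
          rw [hXdef, e1, e2]
          gcongr 4*64^(m+1) / ?_ <;> nlinarith
  -- the shift-term bound
  have hA' : ‖a (shift s) (m/4)‖ ≤ X/7 := by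
    rcases le_or_gt m 3 with hm | hm
    · have hq0 : m/4 = 0 := by omega
      rw [hq0, aux_abs_a0 a ha, hXdef]
      interval_cases m <;> norm_num
    · set q := m/4 with hq
      have hb := ih q (by omega) (by omega) (shift s)
      have hN : (64:ℝ)^q * 64^4 ≤ 64^(m+1) := by
        rw [← pow_add]
        apply pow_le_pow_right₀ (by norm_num) (by omega)
      have hm48 : m + 2 ≤ 8*(q+1) := by omega
      have hD8 : (m:ℝ)+2 ≤ 8*((q:ℝ)+1) := by exact_mod_cast hm48
      refine le_trans hb ?_
      have e3 : (64:ℝ)^(m+1) / (((m:ℝ)+2)^2)/7 = 64^(m+1)/(7*((m:ℝ)+2)^2) := by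
        rw [div_div, mul_comm]
      rw [hXdef, e3]
      rw [div_le_div_iff₀ (by positivity) (by positivity)]
      have hq0 : (0:ℝ) ≤ (q:ℝ) := Nat.cast_nonneg q
      have h1 : ((m:ℝ)+2)^2 ≤ 64*((q:ℝ)+1)^2 := by nlinarith
      have h2 : (64:ℝ)^q*64 ≤ 64^(m+1) := by
        have h4 : (64:ℝ)^q*64 ≤ (64:ℝ)^q*64^4 := by
          apply mul_le_mul_of_nonneg_left (by norm_num) (by positivity)
        linarith
      have h3 : (0:ℝ) < 64^q := by positivity
      nlinarith [sq_nonneg ((q:ℝ)+1)]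
  have hc1 : ((m+1:ℕ):ℝ) = (m:ℝ)+1 := by push_cast; ring
  have hgoal : (64:ℝ)^(m+1) / (7*(((m+1:ℕ):ℝ)+1)^2) = X/7 := by
    rw [hc1, hXdef]
    field_simp
    ring
  rw [ha.2 s m, hgoal]
  split_ifs with h4
  · rw [div_sub_div_same, norm_div, hD]
    have htri := norm_add_le (-(a (shift s) (m/4)))
      (-(∑ i ∈ Finset.Ico 1 (m+1), a s i * a s (m+1-i)))
    rw [← sub_eq_add_neg, norm_neg, norm_neg] at htri
    rw [div_le_iff₀ (by norm_num : (0:ℝ) < 2)]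
    linarith
  · rw [norm_div, hD, norm_neg]
    rw [div_le_iff₀ (by norm_num : (0:ℝ) < 2)]
    linarith

lemma aux_geom (a : BinSeq → ℕ → ℂ) (ha : IsCoeffFamily a) (s : BinSeq) (n : ℕ) :
    ‖a s n‖ ≤ 64^n := by
  rcases Nat.eq_zero_or_pos n with h | h
  · subst h; rw [aux_abs_a0 a ha]; norm_num
  · refine le_trans (aux_bound a ha n h s) ?_
    have h1 : (1:ℝ) ≤ 7*((n:ℝ)+1)^2 := by nlinarith [Nat.cast_nonneg (α := ℝ) n]
    exact div_le_self (by positivity) h1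

lemma aux_summable (a : BinSeq → ℕ → ℂ) (ha : IsCoeffFamily a) (s : BinSeq)
    (r : ℝ) (hr0 : 0 ≤ r) (hr1 : r ≤ 1/10) :
    Summable fun n : ℕ => ‖a s n‖ * r ^ (2+4*n) := by
  have hgeo : Summable fun n : ℕ => r^2 * (64*r^4)^n := by
    apply Summable.mul_left
    apply summable_geometric_of_lt_one (by positivity)
    have h4 : r^4 ≤ (1/10:ℝ)^4 := pow_le_pow_left₀ hr0 hr1 4
    nlinarith
  apply Summable.of_nonneg_of_le (fun n => by positivity) _ hgeo
  intro n
  have h2 : (64:ℝ)^n * r^(2+4*n) = r^2 * (64*r^4)^n := by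
    rw [pow_add, pow_mul, mul_pow]; ring
  calc ‖a s n‖ * r^(2+4*n)
      ≤ 64^n * r^(2+4*n) :=
        mul_le_mul_of_nonneg_right (aux_geom a ha s n) (by positivity)
    _ = r^2 * (64*r^4)^n := h2

/-- For every `s ∈ S` and every real `0 ≤ r < 1/10`, the family `n ↦ |aₙˢ|·r^(2+4n)` is
summable; consequently `φ_s(x,y) = x + Σ_{n≥0} aₙˢ y^(2+4n)` defines a holomorphic
function on `{(x,y) ∈ ℂ² : |y| < 1/10}`. -/
theorem stmt9 (a : BinSeq → ℕ → ℂ) (ha : IsCoeffFamily a) (s : BinSeq) :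
    (∀ r : ℝ, 0 ≤ r → r < 1 / 10 →
      Summable fun n : ℕ => ‖a s n‖ * r ^ (2 + 4 * n)) ∧
    DifferentiableOn ℂ
      (fun p : ℂ × ℂ => p.1 + ∑' n : ℕ, a s n * p.2 ^ (2 + 4 * n))
      {p : ℂ × ℂ | ‖p.2‖ < 1 / 10} := by
  constructor
  · intro r hr0 hr1
    exact aux_summable a ha s r hr0 (le_of_lt hr1)
  · have hU : IsOpen {y : ℂ | ‖y‖ < 1/10} := by
      have he : {y : ℂ | ‖y‖ < 1/10} = Metric.ball (0:ℂ) (1/10) := by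
        ext y; simp [Metric.mem_ball, Complex.dist_eq]
      rw [he]; exact Metric.isOpen_ball
    have hg : DifferentiableOn ℂ (fun y : ℂ => ∑' n : ℕ, a s n * y ^ (2+4*n))
        {y : ℂ | ‖y‖ < 1/10} := by
      apply Complex.differentiableOn_tsum_of_summable_norm
        (u := fun n : ℕ => (64:ℝ)^n * (1/10:ℝ)^(2+4*n))
      · have he : (fun n : ℕ => (64:ℝ)^n * (1/10:ℝ)^(2+4*n))
            = fun n : ℕ => ((1/10:ℝ)^2 * ((64:ℝ)*(1/10:ℝ)^4)^n) := by
          funext n; rw [pow_add, pow_mul, mul_pow]; ring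
        rw [he]
        exact Summable.mul_left _ (summable_geometric_of_lt_one (by norm_num) (by norm_num))
      · intro n
        exact ((differentiable_id.pow _).const_mul _).differentiableOn
      · exact hU
      · intro n w hw
        rw [norm_mul, norm_pow]
        exact mul_le_mul (aux_geom a ha s n)
          (pow_le_pow_left₀ (norm_nonneg _) (le_of_lt hw) _)
          (by positivity) (by positivity)
    have hc : DifferentiableOn ℂ ((fun y : ℂ => ∑' n : ℕ, a s n * y ^ (2+4*n)) ∘ Prod.snd)
        {p : ℂ × ℂ | ‖p.2‖ < 1/10} :=
      hg.comp (differentiable_snd.differentiableOn) (fun p hp => hp)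
    exact (differentiable_fst.differentiableOn).add hc
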